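/- Let G be a finite simple graph and A a subset of V(G). Then U_G(A) ≤ nss_G(A); equivalently β_G(A) ≤ log₂ nss_G(A). That is, the number of distinct sets of the form N(Y)∖A with Y ⊆ A is at most the number of distinct GF(2)-linear spans of subsets of rows of the cut matrix of A. -/

import Mathlib

open Classical in
/-- The cut matrix of `A`: rows indexed by `A`, columns by its complement, over GF(2),
with `(x,y)` entry `1` iff `x` and `y` are adjacent. -/
noncomputable def cutMatrix {V : Type*} [Fintype V] [DecidableEq V]
    (G : SimpleGraph V) (A : Finset V) : Matrix ↥A ↥(Aᶜ) (ZMod 2) :=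
  Matrix.of fun x y => if G.Adj x.1 y.1 then 1 else 0

/-- The cut-rank `ρ_G(A)`: the GF(2)-rank of the cut matrix of `A`. -/
noncomputable def cutRank {V : Type*} [Fintype V] [DecidableEq V]
    (G : SimpleGraph V) (A : Finset V) : ℕ :=
  (cutMatrix G A).rank

/-- The union-count `U_G(A)`: the number of distinct sets `N(Y) \ A` over `Y ⊆ A`. -/
noncomputable def unionCount {V : Type*} [Fintype V] [DecidableEq V]
    (G : SimpleGraph V) (A : Finset V) : ℕ :=
  Set.ncard {S : Set V | ∃ Y : Set V, Y ⊆ ↑A ∧ (⋃ y ∈ Y, G.neighborSet y) \ ↑A = S}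

/-- `nss_G(A)`: the number of distinct GF(2)-linear spans of subsets of rows of the
cut matrix of `A`. -/
noncomputable def nss {V : Type*} [Fintype V] [DecidableEq V]
    (G : SimpleGraph V) (A : Finset V) : ℕ :=
  Set.ncard {W : Submodule (ZMod 2) (↥(Aᶜ) → ZMod 2) |
    ∃ S : Set ↥A, W = Submodule.span (ZMod 2) ((fun x => cutMatrix G A x) '' S)}

/-- the union-count of `A` is at most the number of GF(2)-spans of
subsets of rows of the cut matrix, i.e. `U_G(A) ≤ nss_G(A)`
(equivalently `β_G(A) ≤ log₂ nss_G(A)`). -/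
theorem unionCount_le_nss {V : Type*} [Fintype V] [DecidableEq V]
    (G : SimpleGraph V) (A : Finset V) :
    unionCount G A ≤ nss G A := by
  classical
  have : Finite (Submodule (ZMod 2) (↥(Aᶜ) → ZMod 2)) :=
    Finite.of_injective (fun W => (W : Set (↥(Aᶜ) → ZMod 2))) SetLike.coe_injective
  set spans := {W : Submodule (ZMod 2) (↥(Aᶜ) → ZMod 2) |
    ∃ S : Set ↥A, W = Submodule.span (ZMod 2) ((fun x => cutMatrix G A x) '' S)}
  set unions := {S : Set V | ∃ Y : Set V, Y ⊆ ↑A ∧ (⋃ y ∈ Y, G.neighborSet y) \ ↑A = S}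
  have hfin : spans.Finite := Set.toFinite _
  -- The "support" map from a submodule to a set of vertices
  set Φ : Submodule (ZMod 2) (↥(Aᶜ) → ZMod 2) → Set V :=
    fun W => {v : V | ∃ hv : v ∈ (Aᶜ : Finset V), ∃ w ∈ W, w ⟨v, hv⟩ ≠ 0}
  have hsub : unions ⊆ Φ '' spans := by
    rintro S ⟨Y, hY, rfl⟩
    refine ⟨Submodule.span (ZMod 2)
      ((fun x => cutMatrix G A x) '' {x : ↥A | ↑x ∈ Y}), ⟨_, rfl⟩, ?_⟩
    ext v
    simp only [Φ, Set.mem_setOf_eq, Set.mem_diff, Set.mem_iUnion, SimpleGraph.mem_neighborSet]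
    constructor
    · rintro ⟨hv, w, hw, hwv⟩
      have hvA : v ∉ (A : Set V) := by
        simpa using (Finset.mem_compl.mp hv)
      refine ⟨?_, hvA⟩
      by_contra hcon
      push_neg at hcon
      have hker : Submodule.span (ZMod 2)
          ((fun x => cutMatrix G A x) '' {x : ↥A | ↑x ∈ Y}) ≤
          LinearMap.ker ((LinearMap.proj ⟨v, hv⟩ :
            (↥(Aᶜ) → ZMod 2) →ₗ[ZMod 2] ZMod 2)) := by
        rw [Submodule.span_le]
        rintro _ ⟨x, hx, rfl⟩
        simp only [SetLike.mem_coe, LinearMap.mem_ker, LinearMap.proj_apply]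
        simp only [cutMatrix, Matrix.of_apply]
        rw [if_neg]
        exact hcon x.1 hx
      have := hker hw
      simp only [LinearMap.mem_ker, LinearMap.proj_apply] at this
      exact hwv this
    · rintro ⟨⟨i, hiY, hadj⟩, hvA⟩
      have hv : v ∈ (Aᶜ : Finset V) := Finset.mem_compl.mpr (by simpa using hvA)
      refine ⟨hv, cutMatrix G A ⟨i, by exact_mod_cast hY hiY⟩, ?_, ?_⟩
      · exact Submodule.subset_span ⟨⟨i, by exact_mod_cast hY hiY⟩, hiY, rfl⟩
      · simp only [cutMatrix, Matrix.of_apply, if_pos hadj]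
        exact one_ne_zero
  calc unions.ncard ≤ (Φ '' spans).ncard :=
        Set.ncard_le_ncard hsub (hfin.image Φ)
    _ ≤ spans.ncard := Set.ncard_image_le hfin
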